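/- Let n ≥ 1, let W be an n×n real doubly stochastic matrix such that every entry of W^n is strictly positive, and set ε = max_{j} min_{i} (W^n)_{ij}, so ε ∈ (0,1). Let x : ℕ → ℝ^n evolve according to x(k+1) = W(x(k) + θ(k)) with ‖θ(k)‖_∞ ≤ α ρ^k for all k, where α > 0 and ρ ∈ [0,1). Define V(x(k)) = max_i x_i(k) − min_i x_i(k). Then for every k ≥ 0, V(x(k+n)) ≤ (1 − ε) V(x(k)) + 2 α ρ^k (1 − ρ^{n+1})/(1 − ρ). -/
import Mathlib


open Filter Finset

section Aux

variable {n : ℕ}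

lemma scda_pow_nonneg (W : Matrix (Fin n) (Fin n) ℝ) (h : ∀ i j, 0 ≤ W i j) :
    ∀ m, ∀ i j, 0 ≤ (W ^ m) i j := by
  intro m
  induction m with
  | zero =>
      intro i j
      simp only [pow_zero, Matrix.one_apply]
      split <;> norm_num
  | succ m ih =>
      intro i j
      rw [pow_succ, Matrix.mul_apply]
      exact Finset.sum_nonneg fun k _ => mul_nonneg (ih i k) (h k j)

lemma scda_pow_row (W : Matrix (Fin n) (Fin n) ℝ) (h : ∀ i, ∑ j, W i j = 1) :
    ∀ m, ∀ i, ∑ j, (W ^ m) i j = 1 := by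
  intro m
  induction m with
  | zero =>
      intro i
      simp [Matrix.one_apply, Finset.sum_ite_eq]
  | succ m ih =>
      intro i
      simp only [pow_succ, Matrix.mul_apply]
      rw [Finset.sum_comm]
      calc ∑ k, ∑ j, (W ^ m) i k * W k j
          = ∑ k, (W ^ m) i k * ∑ j, W k j := by
            simp [Finset.mul_sum]
        _ = ∑ k, (W ^ m) i k := by simp [h]
        _ = 1 := ih i

lemma scda_mulVec_norm_le (A : Matrix (Fin n) (Fin n) ℝ)
    (hA : ∀ i j, 0 ≤ A i j) (hrow : ∀ i, ∑ j, A i j = 1)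
    (v : Fin n → ℝ) : ‖A.mulVec v‖ ≤ ‖v‖ := by
  rw [pi_norm_le_iff_of_nonneg (norm_nonneg v)]
  intro i
  simp only [Matrix.mulVec, dotProduct, Real.norm_eq_abs]
  calc |∑ j, A i j * v j| ≤ ∑ j, |A i j * v j| := Finset.abs_sum_le_sum_abs _ _
    _ ≤ ∑ j, A i j * ‖v‖ := by
        refine Finset.sum_le_sum fun j _ => ?_
        rw [abs_mul, abs_of_nonneg (hA i j)]
        exact mul_le_mul_of_nonneg_left (norm_le_pi_norm v j) (hA i j)
    _ = ‖v‖ := by rw [← Finset.sum_mul, hrow, one_mul]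

lemma scda_spread_mulVec (hn : 1 ≤ n) (A : Matrix (Fin n) (Fin n) ℝ)
    (hA : ∀ i j, 0 ≤ A i j) (hrow : ∀ i, ∑ j, A i j = 1) (y : Fin n → ℝ) :
    (⨆ i, A.mulVec y i) - (⨅ i, A.mulVec y i) ≤
      (1 - ⨆ j, ⨅ i, A i j) * ((⨆ i, y i) - (⨅ i, y i)) := by
  have hne : Nonempty (Fin n) := Fin.pos_iff_nonempty.mp hn
  obtain ⟨j₀, hj₀⟩ := Finite.exists_max fun j => ⨅ i, A i j
  have hε : (⨆ j, ⨅ i, A i j) = ⨅ i, A i j₀ :=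
    le_antisymm (ciSup_le hj₀) (le_ciSup (Finite.bddAbove_range fun j => ⨅ i, A i j) j₀)
  set ε := ⨅ i, A i j₀ with hεdef
  have hεle : ∀ i, ε ≤ A i j₀ := fun i => ciInf_le (Finite.bddBelow_range _) i
  set M := ⨆ i, y i with hM
  set m := ⨅ i, y i with hm
  have hyM : ∀ i, y i ≤ M := fun i => le_ciSup (Finite.bddAbove_range _) i
  have hym : ∀ i, m ≤ y i := fun i => ciInf_le (Finite.bddBelow_range _) i
  have expand : ∀ i, A.mulVec y i
      = ε * y j₀ + ∑ j, (A i j - if j = j₀ then ε else 0) * y j := by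
    intro i
    simp only [Matrix.mulVec, dotProduct, sub_mul, Finset.sum_sub_distrib,
      ite_mul, zero_mul, Finset.sum_ite_eq', Finset.mem_univ, if_true]
    ring
  have hBnn : ∀ i j, 0 ≤ A i j - if j = j₀ then ε else 0 := by
    intro i j
    split
    · next h => subst h; linarith [hεle i]
    · simpa using hA i j
  have hBsum : ∀ i, ∑ j, (A i j - if j = j₀ then ε else 0) = 1 - ε := by
    intro i
    rw [Finset.sum_sub_distrib, hrow]
    simp
  have keyU : ∀ i, A.mulVec y i ≤ ε * y j₀ + (1 - ε) * M := by
    intro i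
    rw [expand i]
    gcongr
    calc ∑ j, (A i j - if j = j₀ then ε else 0) * y j
        ≤ ∑ j, (A i j - if j = j₀ then ε else 0) * M :=
          Finset.sum_le_sum fun j _ =>
            mul_le_mul_of_nonneg_left (hyM j) (hBnn i j)
      _ = (1 - ε) * M := by rw [← Finset.sum_mul, hBsum]
  have keyL : ∀ i, ε * y j₀ + (1 - ε) * m ≤ A.mulVec y i := by
    intro i
    rw [expand i]
    gcongr
    calc (1 - ε) * m = ∑ j, (A i j - if j = j₀ then ε else 0) * m := by
          rw [← Finset.sum_mul, hBsum]
      _ ≤ ∑ j, (A i j - if j = j₀ then ε else 0) * y j :=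
          Finset.sum_le_sum fun j _ =>
            mul_le_mul_of_nonneg_left (hym j) (hBnn i j)
  have hsup : (⨆ i, A.mulVec y i) ≤ ε * y j₀ + (1 - ε) * M := ciSup_le keyU
  have hinf : ε * y j₀ + (1 - ε) * m ≤ ⨅ i, A.mulVec y i := le_ciInf keyL
  rw [hε]
  nlinarith [hsup, hinf]

lemma scda_unroll (W : Matrix (Fin n) (Fin n) ℝ) (x θ : ℕ → Fin n → ℝ)
    (hdyn : ∀ k, x (k + 1) = W.mulVec (x k + θ k)) (k : ℕ) :
    ∀ m, x (k + m) = (W ^ m).mulVec (x k)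
      + ∑ t ∈ Finset.range m, (W ^ (m - t)).mulVec (θ (k + t)) := by
  intro m
  induction m with
  | zero => simp [Matrix.one_mulVec]
  | succ m ih =>
      have h1 : k + (m + 1) = (k + m) + 1 := by ring
      rw [h1, hdyn (k + m), ih]
      have hdist : W.mulVec (∑ t ∈ Finset.range m, (W ^ (m - t)).mulVec (θ (k + t)))
          = ∑ t ∈ Finset.range m, W.mulVec ((W ^ (m - t)).mulVec (θ (k + t))) := by
        have h := map_sum (Matrix.mulVecLin W)
          (fun t => (W ^ (m - t)).mulVec (θ (k + t))) (Finset.range m)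
        simp only [Matrix.mulVecLin_apply] at h
        exact h
      rw [Matrix.mulVec_add, Matrix.mulVec_add, hdist]
      rw [Finset.sum_range_succ]
      have h2 : ∀ t ∈ Finset.range m,
          W.mulVec ((W ^ (m - t)).mulVec (θ (k + t)))
            = (W ^ (m + 1 - t)).mulVec (θ (k + t)) := by
        intro t ht
        have htm : t < m := Finset.mem_range.mp ht
        have hmt : m + 1 - t = (m - t) + 1 := by omega
        rw [Matrix.mulVec_mulVec, hmt, pow_succ']
      rw [Finset.sum_congr rfl h2, Matrix.mulVec_mulVec, ← pow_succ']
      simp [pow_one]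
      abel

end Aux

/-- The spread `V(x(k)) = max_i x_i(k) − min_i x_i(k)` of the noisy consensus
iteration satisfies `V(x(k+n)) ≤ (1 − ε) V(x(k)) + 2αρ^k(1 − ρ^{n+1})/(1 − ρ)`,
where `ε = max_j min_i (W^n)_{ij}`. -/
theorem scda_spread_recursion
    (n : ℕ) (hn : 1 ≤ n) (W : Matrix (Fin n) (Fin n) ℝ)
    (hW_nonneg : ∀ i j, 0 ≤ W i j)
    (hW_row : ∀ i, ∑ j, W i j = 1)
    (hW_col : ∀ j, ∑ i, W i j = 1)
    (hWn_pos : ∀ i j, 0 < (W ^ n) i j)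
    (x θ : ℕ → Fin n → ℝ)
    (hdyn : ∀ k, x (k + 1) = W.mulVec (x k + θ k))
    (α ρ : ℝ) (hα : 0 < α) (hρ0 : 0 ≤ ρ) (hρ1 : ρ < 1)
    (hθ : ∀ k, ‖θ k‖ ≤ α * ρ ^ k) :
    ∀ k, (⨆ i, x (k + n) i) - (⨅ i, x (k + n) i) ≤
      (1 - ⨆ j, ⨅ i, (W ^ n) i j) * ((⨆ i, x k i) - (⨅ i, x k i)) +
        2 * α * ρ ^ k * (1 - ρ ^ (n + 1)) / (1 - ρ) := by
  intro k
  have hne : Nonempty (Fin n) := Fin.pos_iff_nonempty.mp hn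
  set u : Fin n → ℝ := (W ^ n).mulVec (x k) with hu
  set E : Fin n → ℝ := ∑ t ∈ Finset.range n, (W ^ (n - t)).mulVec (θ (k + t)) with hE
  have hxkn : x (k + n) = u + E := scda_unroll W x θ hdyn k n
  -- bound on ‖E‖
  have hEnorm : ‖E‖ ≤ α * ρ ^ k * ((1 - ρ ^ n) / (1 - ρ)) := by
    have h1 : ‖E‖ ≤ ∑ t ∈ Finset.range n, ‖(W ^ (n - t)).mulVec (θ (k + t))‖ :=
      norm_sum_le _ _
    have h2 : ∀ t ∈ Finset.range n,
        ‖(W ^ (n - t)).mulVec (θ (k + t))‖ ≤ α * ρ ^ (k + t) := by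
      intro t _
      exact le_trans
        (scda_mulVec_norm_le _ (scda_pow_nonneg W hW_nonneg _)
          (scda_pow_row W hW_row _) _) (hθ (k + t))
    have h3 : ∑ t ∈ Finset.range n, α * ρ ^ (k + t)
        = α * ρ ^ k * ((1 - ρ ^ n) / (1 - ρ)) := by
      have hg : ∑ t ∈ Finset.range n, ρ ^ t = (1 - ρ ^ n) / (1 - ρ) := by
        rw [geom_sum_eq (by linarith : ρ ≠ 1)]
        rw [div_eq_div_iff (by linarith) (by linarith)]
        ring
      calc ∑ t ∈ Finset.range n, α * ρ ^ (k + t)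
          = α * ρ ^ k * ∑ t ∈ Finset.range n, ρ ^ t := by
            rw [Finset.mul_sum]
            exact Finset.sum_congr rfl fun t _ => by rw [pow_add]; ring
        _ = α * ρ ^ k * ((1 - ρ ^ n) / (1 - ρ)) := by rw [hg]
    calc ‖E‖ ≤ ∑ t ∈ Finset.range n, ‖(W ^ (n - t)).mulVec (θ (k + t))‖ := h1
      _ ≤ ∑ t ∈ Finset.range n, α * ρ ^ (k + t) := Finset.sum_le_sum h2
      _ = α * ρ ^ k * ((1 - ρ ^ n) / (1 - ρ)) := h3
  -- spread of sum
  have hsup : (⨆ i, x (k + n) i) ≤ (⨆ i, u i) + ‖E‖ := by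
    refine ciSup_le fun i => ?_
    rw [hxkn]
    have : E i ≤ ‖E‖ := le_trans (le_abs_self _)
      (by simpa [Real.norm_eq_abs] using norm_le_pi_norm E i)
    have hu' : u i ≤ ⨆ i, u i := le_ciSup (Finite.bddAbove_range _) i
    simpa [Pi.add_apply] using add_le_add hu' this
  have hinf : (⨅ i, u i) - ‖E‖ ≤ ⨅ i, x (k + n) i := by
    refine le_ciInf fun i => ?_
    rw [hxkn]
    have : -‖E‖ ≤ E i := by
      have := norm_le_pi_norm E i
      rw [Real.norm_eq_abs] at this
      linarith [neg_abs_le (E i)]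
    have hu' : (⨅ i, u i) ≤ u i := ciInf_le (Finite.bddBelow_range _) i
    simpa [Pi.add_apply, sub_eq_add_neg] using add_le_add hu' this
  have hcontract : (⨆ i, u i) - (⨅ i, u i) ≤
      (1 - ⨆ j, ⨅ i, (W ^ n) i j) * ((⨆ i, x k i) - (⨅ i, x k i)) :=
    scda_spread_mulVec hn (W ^ n) (scda_pow_nonneg W hW_nonneg n)
      (scda_pow_row W hW_row n) (x k)
  -- final combination
  have hmono : α * ρ ^ k * ((1 - ρ ^ n) / (1 - ρ))
      ≤ α * ρ ^ k * ((1 - ρ ^ (n + 1)) / (1 - ρ)) := by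
    have hpow : ρ ^ (n + 1) ≤ ρ ^ n := by
      calc ρ ^ (n + 1) = ρ ^ n * ρ := by ring
        _ ≤ ρ ^ n * 1 := by
            exact mul_le_mul_of_nonneg_left (le_of_lt hρ1) (pow_nonneg hρ0 n)
        _ = ρ ^ n := mul_one _
    have : (1 - ρ ^ n) / (1 - ρ) ≤ (1 - ρ ^ (n + 1)) / (1 - ρ) := by
      apply div_le_div_of_nonneg_right ?_ (by linarith)
      linarith
    exact mul_le_mul_of_nonneg_left this
      (mul_nonneg (le_of_lt hα) (pow_nonneg hρ0 k))
  have h2E : 2 * ‖E‖ ≤ 2 * α * ρ ^ k * (1 - ρ ^ (n + 1)) / (1 - ρ) := by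
    have := le_trans hEnorm hmono
    calc 2 * ‖E‖ ≤ 2 * (α * ρ ^ k * ((1 - ρ ^ (n + 1)) / (1 - ρ))) := by linarith
      _ = 2 * α * ρ ^ k * (1 - ρ ^ (n + 1)) / (1 - ρ) := by ring
  linarith [hsup, hinf, hcontract, h2E]
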